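/- For every ε ∈ (0,1) there exists n₀ ∈ ℕ such that for all n ≥ n₀ the following holds: for every randomized strategy μ on deterministic strategies q : List {0, …, n} → {0,1}^n there exists z ∈ {0,1}^n with E_{q∼μ}[τ(q, OM_z, {z})] ≥ (1−ε)·n/log₂ n. -/

import Mathlib

set_option maxHeartbeats 1000000


open scoped ENNReal

namespace BBC

variable {S V : Type*}

/-- The history of observed objective values after `t` queries:
`hist q f t = [f x₁, …, f x_t]`, where `x₁ = q []` and
`x_{t+1} = q [f x₁, …, f x_t]`. -/
def hist (q : List V → S) (f : S → V) : ℕ → List V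
  | 0 => []
  | t + 1 => hist q f t ++ [f (q (hist q f t))]

/-- `queryPt q f t` is the `(t+1)`-st queried search point `x_{t+1}`. -/
def queryPt (q : List V → S) (f : S → V) (t : ℕ) : S := q (hist q f t)

/-- The hitting time of a deterministic strategy `q` on objective `f` with
target set `M`: the least `t ≥ 1` with `x_t ∈ M`, valued in `ℕ∞`
(and `⊤` if no query ever hits `M`). -/
noncomputable def hitTime (q : List V → S) (f : S → V) (M : Set S) : ℕ∞ :=
  sInf ((fun k : ℕ => (k : ℕ∞) + 1) '' {k | queryPt q f k ∈ M})

/-- The expected hitting time of a randomized strategy `μ` (a probability mass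
function on deterministic strategies) on `(f, M)`, valued in `[0,∞]`. -/
noncomputable def expHitTime (μ : PMF (List V → S)) (f : S → V) (M : Set S) : ℝ≥0∞ :=
  ∑' q, μ q * (hitTime q f M : ℝ≥0∞)

end BBC

/-- OneMax with values in `{0,…,n}`. -/
def OMf {n : ℕ} (z x : Fin n → Bool) : Fin (n + 1) :=
  ⟨(Finset.univ.filter fun i => x i = z i).card,
    Nat.lt_succ_of_le (le_trans (Finset.card_filter_le _ _) (by simp))⟩


lemma hist_length {S V : Type*} (q : List V → S) (f : S → V) (t : ℕ) :
    (BBC.hist q f t).length = t := by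
  induction t with
  | zero => rfl
  | succ t ih => simp [BBC.hist, ih]

lemma hitTime_lb {S V : Type*} (q : List V → S) (f : S → V) (z : S) (t : ℕ)
    (h : ∀ k < t, BBC.queryPt q f k ≠ z) :
    ((t : ℕ∞) + 1) ≤ BBC.hitTime q f {z} := by
  apply le_sInf
  rintro x ⟨k, hk, rfl⟩
  have hk' : t ≤ k := Nat.le_of_not_lt (fun hlt => h k hlt hk)
  exact add_le_add_left (by exact_mod_cast hk') 1

noncomputable def Bad {n : ℕ} (q : List (Fin (n+1)) → (Fin n → Bool)) (t : ℕ) :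
    Finset (Fin n → Bool) :=
  Finset.image (fun p : (Σ k : Fin t, List.Vector (Fin (n+1)) k) => q p.2.val) Finset.univ

lemma card_Bad {n : ℕ} (hn : 1 ≤ n) (q : List (Fin (n+1)) → (Fin n → Bool)) (t : ℕ) :
    (Bad q t).card ≤ (n+1)^t := by
  calc (Bad q t).card ≤ Fintype.card (Σ k : Fin t, List.Vector (Fin (n+1)) k) :=
        Finset.card_image_le.trans (by simp)
    _ = ∑ k ∈ Finset.range t, (n+1)^k := by
        simp [Fintype.card_sigma, card_vector, Fin.sum_univ_eq_sum_range]
    _ ≤ (n+1)^t := by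
        induction t with
        | zero => simp
        | succ t ih =>
          rw [Finset.sum_range_succ, pow_succ]
          have h2 : (2:ℕ) ≤ n + 1 := by omega
          nlinarith [pow_pos (Nat.succ_pos n) t]

lemma mem_Bad {n : ℕ} (q : List (Fin (n+1)) → (Fin n → Bool)) (t k : ℕ) (hk : k < t)
    (f : (Fin n → Bool) → Fin (n+1)) :
    BBC.queryPt q f k ∈ Bad q t := by
  exact Finset.mem_image.2 ⟨⟨⟨k, hk⟩, ⟨BBC.hist q f k, hist_length q f k⟩⟩, Finset.mem_univ _, rfl⟩

lemma sum_hit_lb {n : ℕ} (hn : 1 ≤ n) (t : ℕ) (q : List (Fin (n+1)) → (Fin n → Bool)) :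
    ((t+1 : ℕ) : ℝ≥0∞) * ((2^n - (n+1)^t : ℕ) : ℝ≥0∞) ≤
      ∑ z : Fin n → Bool, ((BBC.hitTime q (OMf z) {z} : ℕ∞) : ℝ≥0∞) := by
  have key : ∀ z : Fin n → Bool, z ∉ Bad q t →
      ((t+1 : ℕ) : ℝ≥0∞) ≤ ((BBC.hitTime q (OMf z) {z} : ℕ∞) : ℝ≥0∞) := by
    intro z hz
    have h1 : ((t : ℕ∞) + 1) ≤ BBC.hitTime q (OMf z) {z} := by
      apply hitTime_lb
      intro k hk hne
      exact hz (hne ▸ mem_Bad q t k hk (OMf z))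
    have := ENat.toENNReal_le.2 h1
    simpa using this
  calc ((t+1 : ℕ) : ℝ≥0∞) * ((2^n - (n+1)^t : ℕ) : ℝ≥0∞)
      ≤ ((t+1 : ℕ) : ℝ≥0∞) * ((Finset.univ \ Bad q t).card : ℝ≥0∞) := by
        apply mul_le_mul_right
        have hcard : 2^n - (n+1)^t ≤ (Finset.univ \ Bad q t).card := by
          have h1 := card_Bad hn q t
          have h2 : (Finset.univ \ Bad q t).card = 2^n - (Bad q t).card := by
            rw [Finset.card_sdiff_of_subset (Finset.subset_univ _)]
            simp [Fintype.card_fun]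
          omega
        exact_mod_cast Nat.cast_le.2 hcard
    _ ≤ ∑ z ∈ Finset.univ \ Bad q t, ((BBC.hitTime q (OMf z) {z} : ℕ∞) : ℝ≥0∞) := by
        rw [mul_comm]
        have := Finset.card_nsmul_le_sum (Finset.univ \ Bad q t)
          (fun z => ((BBC.hitTime q (OMf z) {z} : ℕ∞) : ℝ≥0∞)) (((t+1 : ℕ) : ℝ≥0∞))
          (fun z hz => key z (Finset.mem_sdiff.1 hz).2)
        simpa [nsmul_eq_mul, mul_add] using this
    _ ≤ ∑ z : Fin n → Bool, ((BBC.hitTime q (OMf z) {z} : ℕ∞) : ℝ≥0∞) :=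
        Finset.sum_le_sum_of_subset (Finset.sdiff_subset)


open Filter in
lemma analytic (ε : ℝ) (hε0 : 0 < ε) (hε1 : ε < 1) :
    ∀ᶠ n : ℕ in atTop,
      ((n:ℝ)+1) ^ (⌈(1 - ε/2) * n / Real.logb 2 n⌉₊) ≤ (ε/4) * 2^n ∧
      (2:ℝ)^n * ((1-ε) * n / Real.logb 2 n) <
        ((⌈(1 - ε/2) * n / Real.logb 2 n⌉₊ : ℝ) + 1) *
          ((2:ℝ)^n - ((n:ℝ)+1) ^ (⌈(1 - ε/2) * n / Real.logb 2 n⌉₊)) := by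
  have hg : Tendsto (fun n : ℕ => (Real.log 2)^2 / Real.log n + Real.log n / n
      + (Real.log 2 - Real.log (ε/4)) / n) atTop (nhds 0) := by
    have h1 : Tendsto (fun n : ℕ => (Real.log 2)^2 / Real.log n) atTop (nhds 0) :=
      Tendsto.div_atTop tendsto_const_nhds
        (Real.tendsto_log_atTop.comp tendsto_natCast_atTop_atTop)
    have h2 : Tendsto (fun n : ℕ => Real.log n / n) atTop (nhds 0) :=
      (Real.isLittleO_log_id_atTop.tendsto_div_nhds_zero).comp tendsto_natCast_atTop_atTop
    have h3 : Tendsto (fun n : ℕ => (Real.log 2 - Real.log (ε/4)) / n) atTop (nhds 0) :=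
      Tendsto.div_atTop tendsto_const_nhds tendsto_natCast_atTop_atTop
    simpa using (h1.add h2).add h3
  have hev := hg.eventually_lt_const (show (0:ℝ) < (ε/2) * Real.log 2 by
    have := Real.log_pos (by norm_num : (1:ℝ) < 2); positivity)
  filter_upwards [hev, eventually_ge_atTop 2] with n hlt hn2
  set A := Real.log n with hA
  set B := Real.log 2 with hB
  have hn2R : (2:ℝ) ≤ (n:ℝ) := by exact_mod_cast hn2
  have hnpos : (0:ℝ) < n := by linarith
  have hApos : 0 < A := Real.log_pos (by linarith)
  have hBpos : 0 < B := Real.log_pos (by norm_num)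
  have hL : Real.logb 2 (n:ℝ) = A / B := rfl
  have hBA : B ≤ A := by
    rw [hA, hB]; exact Real.log_le_log (by norm_num) hn2R
  have hL1 : 1 ≤ A / B := (one_le_div hBpos).2 hBA
  have hLpos : 0 < A / B := by linarith
  set t := ⌈(1 - ε/2) * n / Real.logb 2 n⌉₊ with ht
  have hεpos2 : 0 < 1 - ε/2 := by linarith
  have harg : 0 ≤ (1 - ε/2) * n / Real.logb 2 n := by
    rw [hL]; positivity
  have ht_low : (1 - ε/2) * n / (A/B) ≤ t := by rw [ht, hL] at *; exact Nat.le_ceil _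
  have ht_up : (t:ℝ) ≤ (1 - ε/2) * n / (A/B) + 1 := by
    rw [ht]; rw [hL] at harg ⊢; exact (Nat.ceil_lt_add_one harg).le
  have hdiv : (1 - ε/2) * n / (A/B) = (1 - ε/2) * n * B / A := by
    field_simp
  -- (*) after multiplying hlt by n
  have hstar : (n:ℝ) * (B^2/A) + A + (B - Real.log (ε/4)) < (ε/2) * B * n := by
    have h := mul_lt_mul_of_pos_left hlt hnpos
    have e : (n:ℝ) * (B^2/A + A/(n:ℝ) + (B - Real.log (ε/4))/(n:ℝ))
        = n*(B^2/A) + A + (B - Real.log (ε/4)) := by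
      field_simp
    rw [e] at h; linarith
  -- key log inequality
  have hlog_np1 : Real.log ((n:ℝ)+1) ≤ A + B := by
    have h1 : ((n:ℝ)+1) ≤ 2 * n := by linarith
    have := Real.log_le_log (by linarith) h1
    rw [Real.log_mul (by norm_num) (ne_of_gt hnpos)] at this
    linarith
  have hlog_np1_pos : 0 ≤ Real.log ((n:ℝ)+1) := Real.log_nonneg (by linarith)
  have hkey : (t:ℝ) * Real.log ((n:ℝ)+1) ≤ Real.log (ε/4) + n * B := by
    have e1 : (t:ℝ) * Real.log ((n:ℝ)+1) ≤ ((1 - ε/2) * n * B / A + 1) * (A + B) := by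
      have ht_up' : (t:ℝ) ≤ (1 - ε/2) * n * B / A + 1 := by rw [← hdiv]; exact ht_up
      apply mul_le_mul ht_up' hlog_np1 hlog_np1_pos (by positivity)
    have e2 : ((1 - ε/2) * n * B / A + 1) * (A + B) =
        (1 - ε/2) * n * B + ((1 - ε/2) * (n * B * B)) / A + A + B := by
      field_simp; ring
    have e3 : ((1 - ε/2) * (n * B * B)) / A ≤ n * (B^2/A) := by
      rw [mul_div_assoc' (n:ℝ) _ A]
      gcongr ?_ / A
      nlinarith [mul_pos hnpos (mul_pos hBpos hBpos)]
    rw [e2] at e1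
    linarith
  -- (A)
  have hA4 : ((n:ℝ)+1) ^ t ≤ (ε/4) * 2^n := by
    have hp1 : (0:ℝ) < ((n:ℝ)+1) ^ t := by positivity
    have hp2 : (0:ℝ) < (ε/4) * 2^n := by positivity
    rw [← Real.log_le_log_iff hp1 hp2, Real.log_pow,
      Real.log_mul (by positivity) (by positivity), Real.log_pow]
    simpa [← hB] using hkey
  refine ⟨hA4, ?_⟩
  set X := ((n:ℝ)+1) ^ t with hX
  set Y := (2:ℝ)^n with hY
  have h2pos : (0:ℝ) < Y := by rw [hY]; positivity
  have hXpos : (0:ℝ) < X := by rw [hX]; positivity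
  have hsub : (1 - ε/4) * Y ≤ Y - X := by nlinarith [hA4]
  have htp1 : (1 - ε/2) * n / (A/B) < (t:ℝ) + 1 := by linarith
  rw [hL]
  have key2 : ∀ Q : ℝ, 0 < Q → (1-ε)*Q < (1-ε/2)*((1-ε/4)*Q) := by
    intro Q hQ; nlinarith [mul_pos hε0 hQ, mul_nonneg (mul_nonneg hε0.le hε0.le) hQ.le]
  have hQpos : 0 < (n:ℝ)/(A/B) * Y := by positivity
  calc Y * ((1-ε) * n / (A/B)) = (1-ε) * ((n:ℝ)/(A/B) * Y) := by ring
    _ < (1-ε/2)*((1-ε/4) * ((n:ℝ)/(A/B) * Y)) := key2 _ hQpos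
    _ = ((1-ε/2) * n / (A/B)) * ((1-ε/4)*Y) := by ring
    _ ≤ ((t:ℝ)+1) * (Y - X) := by
        apply mul_le_mul htp1.le hsub (by nlinarith [h2pos]) (by positivity)

theorem stmt2 : ∀ ε : ℝ, 0 < ε → ε < 1 → ∃ n₀ : ℕ, ∀ n : ℕ, n₀ ≤ n →
    ∀ μ : PMF (List (Fin (n + 1)) → (Fin n → Bool)),
      ∃ z : Fin n → Bool,
        ENNReal.ofReal ((1 - ε) * n / Real.logb 2 n) ≤ BBC.expHitTime μ (OMf z) {z} := by
  intro ε hε0 hε1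
  obtain ⟨n₀, hn₀⟩ := Filter.eventually_atTop.1 (analytic ε hε0 hε1)
  refine ⟨max n₀ 2, fun n hn μ => ?_⟩
  have hn2 : 2 ≤ n := le_trans (le_max_right _ _) hn
  have hn1 : 1 ≤ n := by omega
  obtain ⟨hA4, hmain⟩ := hn₀ n (le_trans (le_max_left _ _) hn)
  by_contra hcon
  push_neg at hcon
  set T := (1-ε) * (n:ℝ) / Real.logb 2 n with hT
  set t := ⌈(1 - ε/2) * (n:ℝ) / Real.logb 2 n⌉₊ with ht
  have hlogb : (0:ℝ) ≤ Real.logb 2 n :=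
    Real.logb_nonneg one_lt_two (by exact_mod_cast hn1)
  have hTnn : 0 ≤ T := by
    rw [hT]
    apply div_nonneg _ hlogb
    have : 0 ≤ (n:ℝ) := Nat.cast_nonneg n
    nlinarith
  have hupper : ∑ z : Fin n → Bool, BBC.expHitTime μ (OMf z) {z}
      ≤ ((2^n : ℕ) : ℝ≥0∞) * ENNReal.ofReal T := by
    calc ∑ z : Fin n → Bool, BBC.expHitTime μ (OMf z) {z}
        ≤ ∑ _z : Fin n → Bool, ENNReal.ofReal T :=
          Finset.sum_le_sum (fun z _ => (hcon z).le)
      _ = ((2^n : ℕ) : ℝ≥0∞) * ENNReal.ofReal T := by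
          simp [Finset.sum_const, nsmul_eq_mul]
  have hlower : (((t+1) * (2^n - (n+1)^t) : ℕ) : ℝ≥0∞)
      ≤ ∑ z : Fin n → Bool, BBC.expHitTime μ (OMf z) {z} := by
    have hsw : ∑ z : Fin n → Bool, BBC.expHitTime μ (OMf z) {z}
        = ∑' q, ∑ z : Fin n → Bool, μ q * ((BBC.hitTime q (OMf z) {z} : ℕ∞) : ℝ≥0∞) := by
      unfold BBC.expHitTime
      exact (Summable.tsum_finsetSum (fun z _ => ENNReal.summable)).symm
    rw [hsw]
    calc (((t+1) * (2^n - (n+1)^t) : ℕ) : ℝ≥0∞)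
        = (∑' q : List (Fin (n+1)) → (Fin n → Bool), μ q) *
            (((t+1) * (2^n - (n+1)^t) : ℕ) : ℝ≥0∞) := by rw [μ.tsum_coe, one_mul]
      _ = ∑' q, μ q * (((t+1) * (2^n - (n+1)^t) : ℕ) : ℝ≥0∞) := by
          rw [← ENNReal.tsum_mul_right]
      _ ≤ ∑' q, ∑ z : Fin n → Bool, μ q * ((BBC.hitTime q (OMf z) {z} : ℕ∞) : ℝ≥0∞) := by
          apply ENNReal.tsum_le_tsum
          intro q
          rw [← Finset.mul_sum]
          apply mul_le_mul_right
          have := sum_hit_lb hn1 t q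
          calc (((t+1) * (2^n - (n+1)^t) : ℕ) : ℝ≥0∞)
              = ((t+1 : ℕ) : ℝ≥0∞) * ((2^n - (n+1)^t : ℕ) : ℝ≥0∞) := by push_cast; ring
            _ ≤ _ := this
  have hC := hlower.trans hupper
  have hofreal : ((2^n : ℕ) : ℝ≥0∞) * ENNReal.ofReal T = ENNReal.ofReal ((2^n : ℕ) * T) := by
    rw [ENNReal.ofReal_mul (by positivity)]
    congr 1
    exact (ENNReal.ofReal_natCast _).symm
  rw [← ENNReal.ofReal_natCast, hofreal] at hC
  have hreal : (((t+1) * (2^n - (n+1)^t) : ℕ) : ℝ) ≤ ((2^n : ℕ) : ℝ) * T :=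
    (ENNReal.ofReal_le_ofReal_iff (by positivity)).1 hC
  have hnat : (n+1)^t ≤ 2^n := by
    have h1 : (((n+1)^t : ℕ):ℝ) ≤ ((2^n : ℕ):ℝ) := by
      push_cast
      nlinarith [hA4, pow_pos (show (0:ℝ) < 2 by norm_num) n]
    exact_mod_cast h1
  rw [Nat.cast_mul, Nat.cast_sub hnat] at hreal
  push_cast at hreal
  rw [hT] at hreal
  linarith [hmain, hreal]
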